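/- For every natural number n, F_1·L_n = (b/a)^{ε(n+1)}·L_{n+1}, where ε(n) = 1 if n is odd, 0 if n is even. -/

import Mathlib

theorem stmt_10 (a b : ℝ) (ha : a ≠ 0) (hb : b ≠ 0)
  (F : ℕ → Matrix (Fin 2) (Fin 2) ℝ) (hF0 : F 0 = 1) (hF1 : F 1 = !![b, b/a; 1, 0])
  (hF : ∀ n : ℕ, F (n + 2) = if Even (n + 2) then a • F (n + 1) + F n else b • F (n + 1) + F n)
  (L : ℕ → Matrix (Fin 2) (Fin 2) ℝ) (hL0 : L 0 = !![a, 2; 2*a/b, -a])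
  (hL1 : L 1 = !![a^2 + 2*a/b, a; a^2/b, 2*a/b])
  (hL : ∀ n : ℕ, L (n + 2) = if Odd (n + 2) then a • L (n + 1) + L n else b • L (n + 1) + L n) :
    ∀ n : ℕ, F 1 * L n = (b/a) ^ (if Odd (n+1) then 1 else 0) • L (n + 1) := by
  have hba : b / a * a = b := div_mul_cancel₀ b ha
  intro n
  induction n using Nat.twoStepInduction with
  | zero =>
    rw [hF1, hL0, hL1]
    norm_num
    refine ⟨⟨?_, ?_⟩, ?_, ?_⟩ <;> field_simp <;> ring
  | one =>
    have h2 := hL 0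
    rw [if_neg (by decide : ¬ Odd (0+2))] at h2
    rw [show (1:ℕ)+1 = 2 from rfl, if_neg (by decide : ¬ Odd 2), pow_zero, one_smul,
      hF1, h2, hL0, hL1]
    ext i j
    fin_cases i <;> fin_cases j <;>
      simp [Matrix.mul_apply, Fin.sum_univ_succ, Matrix.smul_apply, Matrix.add_apply] <;>
        field_simp <;> ring
  | more n ih1 ih2 =>
    have hba' : a * (b / a) = b := (mul_comm a (b/a)).trans hba
    simp only [show n+1+1 = n+2 from rfl, show n+2+1 = n+3 from rfl] at ih2 ⊢
    rcases Nat.even_or_odd n with he | ho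
    · have hn2 := Nat.even_iff.mp he
      have h1 : ¬ Odd (n + 2) := by simp [Nat.odd_iff]; omega
      have h2 : Odd (n + 3) := by simp [Nat.odd_iff]; omega
      have h3 : Odd (n + 1) := by simp [Nat.odd_iff]; omega
      rw [if_pos h3, pow_one] at ih1
      rw [if_neg h1, pow_zero, one_smul] at ih2
      rw [hL n, if_neg h1, mul_add, Matrix.mul_smul, ih2, ih1, if_pos h2, pow_one,
        show L (n+3) = L (n+1+2) from rfl, hL (n+1),
        show n+1+2 = n+3 from rfl, if_pos h2, smul_add, smul_smul, hba]
    · have hn2 := Nat.odd_iff.mp ho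
      have h1 : Odd (n + 2) := by simp [Nat.odd_iff]; omega
      have h2 : ¬ Odd (n + 3) := by simp [Nat.odd_iff]; omega
      have h3 : ¬ Odd (n + 1) := by simp [Nat.odd_iff]; omega
      rw [if_neg h3, pow_zero, one_smul] at ih1
      rw [if_pos h1, pow_one] at ih2
      rw [hL n, if_pos h1, mul_add, Matrix.mul_smul, ih2, ih1, if_neg h2, pow_zero, one_smul,
        show L (n+3) = L (n+1+2) from rfl, hL (n+1),
        show n+1+2 = n+3 from rfl, if_neg h2, smul_smul, hba']
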